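/- Let (U_t) be a strongly continuous unitary one-parameter group on ℋ with self-adjoint generator B, and let A ∈ B(ℋ) be such that A(ℋ) ⊆ D(B²) and B²A is bounded (as an everywhere-defined operator). Then the map t ↦ U_t A from ℝ to B(ℋ) is differentiable in the operator norm at t = 0, with derivative iBA, i.e., lim_{t→0} ‖(1/t)(U_t A − A) − iBA‖ = 0. -/

import Mathlib

open scoped InnerProductSpace

/-- For a strongly continuous unitary one-parameter group `U_t = e^{itB}` with self-adjoint
generator `B`, and `A` bounded with `A(H) ⊆ D(B²)` and `B²A` bounded (as well as `BA = T1`),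
the map `t ↦ U_t ∘ A` is norm-differentiable at `t = 0` with derivative `iBA`. -/
theorem stmt8
    {H : Type*} [NormedAddCommGroup H] [InnerProductSpace ℂ H] [CompleteSpace H]
    (U : ℝ → H →L[ℂ] H)
    (hU0 : U 0 = 1) (hUadd : ∀ s t : ℝ, U (s + t) = U s ∘L U t)
    (hUiso : ∀ (t : ℝ) (v : H), ‖U t v‖ = ‖v‖)
    (hUcont : ∀ v : H, Continuous fun t : ℝ => U t v)
    (B : H →ₗ.[ℂ] H) (hdense : Dense (B.domain : Set H)) (hsa : B.adjoint = B)
    (hgen : ∀ (v : B.domain) (t : ℝ),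
      HasDerivAt (fun s : ℝ => U s (v : H)) (Complex.I • U t (B v)) t)
    (A T1 T2 : H →L[ℂ] H)
    (hA1 : ∀ v : H, A v ∈ B.domain)
    (hA2 : ∀ v : H, B ⟨A v, hA1 v⟩ ∈ B.domain)
    (hT1 : ∀ v : H, T1 v = B ⟨A v, hA1 v⟩)
    (hT2 : ∀ v : H, T2 v = B ⟨B ⟨A v, hA1 v⟩, hA2 v⟩) :
    HasDerivAt (fun t : ℝ => U t ∘L A) (Complex.I • T1) 0 := by
  -- Step 1: `‖U t (T1 v) - T1 v‖ ≤ ‖T2‖ * ‖v‖ * |t|`.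
  have step1 : ∀ (v : H) (t : ℝ), ‖U t (T1 v) - T1 v‖ ≤ ‖T2‖ * ‖v‖ * |t| := by
    intro v t
    have hd : ∀ s : ℝ, HasDerivAt (fun r : ℝ => U r (T1 v)) (Complex.I • U s (T2 v)) s := by
      intro s
      have h := hgen ⟨B ⟨A v, hA1 v⟩, hA2 v⟩ s
      rw [← hT2 v] at h
      simpa [← hT1 v] using h
    have := Convex.norm_image_sub_le_of_norm_hasDerivWithin_le
      (f := fun r : ℝ => U r (T1 v)) (f' := fun s : ℝ => Complex.I • U s (T2 v))
      (C := ‖T2‖ * ‖v‖) (s := Set.univ)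
      (fun x _ => (hd x).hasDerivWithinAt)
      (fun x _ => by
        rw [norm_smul, Complex.norm_I, one_mul, hUiso]
        exact T2.le_opNorm v)
      convex_univ (Set.mem_univ 0) (Set.mem_univ t)
    simpa [hU0, Real.norm_eq_abs] using this
  -- Step 2: second-order bound for the remainder.
  have key : ∀ (v : H) (t : ℝ),
      ‖U t (A v) - (A v + t • (Complex.I • T1 v))‖ ≤ ‖T2‖ * ‖v‖ * t ^ 2 := by
    intro v t
    have hdg : ∀ s : ℝ, HasDerivAt
        (fun r : ℝ => U r (A v) - (A v + r • (Complex.I • T1 v)))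
        (Complex.I • U s (T1 v) - Complex.I • T1 v) s := by
      intro s
      have h1 : HasDerivAt (fun r : ℝ => U r (A v)) (Complex.I • U s (T1 v)) s := by
        simpa [← hT1 v] using hgen ⟨A v, hA1 v⟩ s
      have h2 : HasDerivAt (fun r : ℝ => A v + r • (Complex.I • T1 v))
          (Complex.I • T1 v) s := by
        simpa using ((hasDerivAt_id s).smul_const (Complex.I • T1 v)).const_add (A v)
      exact h1.sub h2
    have := Convex.norm_image_sub_le_of_norm_hasDerivWithin_le
      (f := fun r : ℝ => U r (A v) - (A v + r • (Complex.I • T1 v)))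
      (f' := fun s : ℝ => Complex.I • U s (T1 v) - Complex.I • T1 v)
      (C := ‖T2‖ * ‖v‖ * |t|) (s := Set.uIcc 0 t)
      (fun x _ => (hdg x).hasDerivWithinAt)
      (fun x hx => by
        have hxle : |x| ≤ |t| := by
          rcases hx with ⟨h1, h2⟩
          rw [abs_le]
          refine ⟨le_trans (le_min (neg_nonpos_of_nonneg (abs_nonneg t)) (neg_abs_le t)) h1,
            le_trans h2 (max_le (abs_nonneg t) (le_abs_self t))⟩
        have : ‖Complex.I • U x (T1 v) - Complex.I • T1 v‖
            = ‖U x (T1 v) - T1 v‖ := by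
          rw [← smul_sub, norm_smul, Complex.norm_I, one_mul]
        rw [this]
        calc ‖U x (T1 v) - T1 v‖ ≤ ‖T2‖ * ‖v‖ * |x| := step1 v x
          _ ≤ ‖T2‖ * ‖v‖ * |t| := by
            have h0 : (0:ℝ) ≤ ‖T2‖ * ‖v‖ := by positivity
            exact mul_le_mul_of_nonneg_left hxle h0)
      (convex_uIcc 0 t) (Set.left_mem_uIcc) (Set.right_mem_uIcc)
    have h1 : ‖U t (A v) - (A v + t • (Complex.I • T1 v))‖ ≤ ‖T2‖ * ‖v‖ * |t| * |t| := by
      simpa [hU0, Real.norm_eq_abs] using this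
    calc ‖U t (A v) - (A v + t • (Complex.I • T1 v))‖
        ≤ ‖T2‖ * ‖v‖ * |t| * |t| := h1
      _ = ‖T2‖ * ‖v‖ * t ^ 2 := by rw [mul_assoc, abs_mul_abs_self, sq]
  -- Operator-norm bound.
  have opkey : ∀ t : ℝ, ‖U t ∘L A - A - t • (Complex.I • T1)‖ ≤ ‖T2‖ * t ^ 2 := by
    intro t
    refine ContinuousLinearMap.opNorm_le_bound _ (by positivity) fun v => ?_
    have : (U t ∘L A - A - t • (Complex.I • T1)) v
        = U t (A v) - (A v + t • (Complex.I • T1 v)) := by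
      simp [sub_sub]
    rw [this]
    calc ‖U t (A v) - (A v + t • (Complex.I • T1 v))‖
        ≤ ‖T2‖ * ‖v‖ * t ^ 2 := key v t
      _ = ‖T2‖ * t ^ 2 * ‖v‖ := by ring
  -- little-o conclusion
  have hsq : (fun t : ℝ => t ^ 2) =o[nhds 0] fun t : ℝ => t := by
    rw [Asymptotics.isLittleO_iff]
    intro c hc
    filter_upwards [eventually_abs_sub_lt 0 hc] with t ht
    simp only [sub_zero] at ht
    rw [Real.norm_eq_abs, Real.norm_eq_abs, abs_pow, sq]
    nlinarith [abs_nonneg t]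
  rw [hasDerivAt_iff_isLittleO]
  have main : (fun t : ℝ => U t ∘L A - A - t • (Complex.I • T1)) =o[nhds 0]
      fun t : ℝ => t := by
    refine Asymptotics.IsBigO.trans_isLittleO ?_ hsq
    refine Asymptotics.IsBigO.of_bound ‖T2‖ ?_
    filter_upwards with t
    calc ‖U t ∘L A - A - t • (Complex.I • T1)‖ ≤ ‖T2‖ * t ^ 2 := opkey t
      _ = ‖T2‖ * ‖t ^ 2‖ := by rw [Real.norm_eq_abs, abs_of_nonneg (sq_nonneg t)]
  simpa [hU0, sub_zero, ContinuousLinearMap.one_def] using main
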